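/- Let M be a symmetric positive semidefinite N×N matrix and α, γ > 0. Any optimal solution G⋆ of the convex SDP: minimize −½ log det(I + αG) + (γ/2)Tr(GM) subject to G ⪰ 0 and Tr(G) = N, commutes with M (i.e., G⋆M = MG⋆), so G⋆ and M are simultaneously diagonalizable by an orthogonal matrix. -/

import Mathlib

open Matrix Module.End LinearMap.IsSymmetric NormedSpace

section Aux

variable {N : ℕ}

private -- inner product on EuclideanSpace ℝ as a sum
lemma euclid_inner (x y : EuclideanSpace ℝ (Fin N)) :
    (inner ℝ x y : ℝ) = ∑ k, x k * y k := by
  simp [PiLp.inner_apply, mul_comm]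

lemma toEuclideanLin_mul (X Y : Matrix (Fin N) (Fin N) ℝ) :
    toEuclideanLin (X * Y) = toEuclideanLin X * toEuclideanLin Y := by
  apply LinearMap.ext; intro x
  simp [Module.End.mul_apply, toEuclideanLin_apply, mulVec_mulVec]

lemma key_vec (A B : Matrix (Fin N) (Fin N) ℝ)
    (hA : A.IsHermitian) (hB : B.IsHermitian) (hAB : A * B = B * A) (c : ℝ)
    (hc : ∀ l1 m1 l2 m2 : ℝ, HasEigenvalue (toEuclideanLin A) l1 →
      HasEigenvalue (toEuclideanLin B) m1 → HasEigenvalue (toEuclideanLin A) l2 →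
      HasEigenvalue (toEuclideanLin B) m2 → l1 + c * m1 = l2 + c * m2 → l1 = l2 ∧ m1 = m2)
    (ν : ℝ) (v : EuclideanSpace ℝ (Fin N))
    (hv : toEuclideanLin (A + c • B) v = ν • v) :
    ∃ lam mu : ℝ, toEuclideanLin A v = lam • v ∧ toEuclideanLin B v = mu • v := by
  classical
  have hA' : (toEuclideanLin A).IsSymmetric := (isHermitian_iff_isSymmetric).mp hA
  have hB' : (toEuclideanLin B).IsSymmetric := (isHermitian_iff_isSymmetric).mp hB
  have hcomm : Commute (toEuclideanLin A) (toEuclideanLin B) := by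
    rw [Commute, SemiconjBy, ← toEuclideanLin_mul, ← toEuclideanLin_mul, hAB]
  set V : ℝ × ℝ → Submodule ℝ (EuclideanSpace ℝ (Fin N)) :=
    fun p => eigenspace (toEuclideanLin A) p.2 ⊓ eigenspace (toEuclideanLin B) p.1 with hV
  have htop : (⨆ p : ℝ × ℝ, V p) = ⊤ := by
    rw [hV, iSup_prod, iSup_comm]
    exact iSup_iSup_eigenspace_inf_eigenspace_eq_top_of_commute hA' hB' hcomm
  have horth : ∀ p q : ℝ × ℝ, p ≠ q → ∀ x ∈ V p, ∀ y ∈ V q, (inner ℝ x y : ℝ) = 0 := by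
    intro p q hpq x hx y hy
    exact orthogonalFamily_eigenspace_inf_eigenspace hA' hB' hpq ⟨x, hx⟩ ⟨y, hy⟩
  have hv' : v ∈ ⨆ p : ℝ × ℝ, V p := htop ▸ Submodule.mem_top
  obtain ⟨F, hF, hsum⟩ := (Submodule.mem_iSup_iff_exists_finsupp V v).mp hv'
  -- eigen-action on each component
  have hTF : ∀ p : ℝ × ℝ, toEuclideanLin (A + c • B) (F p) = (p.2 + c * p.1) • F p := by
    intro p
    have h1 : toEuclideanLin A (F p) = p.2 • F p := mem_eigenspace_iff.mp (hF p).1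
    have h2 : toEuclideanLin B (F p) = p.1 • F p := mem_eigenspace_iff.mp (hF p).2
    rw [map_add, LinearEquiv.map_smul, LinearMap.add_apply, LinearMap.smul_apply, h1, h2,
      smul_smul, add_smul]
  have hsum' : ∑ p ∈ F.support, F p = v := by rw [← hsum]; rfl
  -- all support elements give eigenvalue ν
  have hsupp : ∀ q ∈ F.support, q.2 + c * q.1 = ν := by
    intro q hq
    by_contra hne
    have hFq : F q ≠ 0 := Finsupp.mem_support_iff.mp hq
    have h0 : toEuclideanLin (A + c • B) v - ν • v = 0 := by rw [hv]; simp
    have hexp : toEuclideanLin (A + c • B) v - ν • v =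
        ∑ p ∈ F.support, ((p.2 + c * p.1) - ν) • F p := by
      rw [← hsum', map_sum]
      rw [Finset.smul_sum, ← Finset.sum_sub_distrib]
      refine Finset.sum_congr rfl fun p _ => ?_
      rw [hTF p, sub_smul]
    have hinner : (inner ℝ (F q) (toEuclideanLin (A + c • B) v - ν • v) : ℝ) =
        ((q.2 + c * q.1) - ν) * (inner ℝ (F q) (F q) : ℝ) := by
      rw [hexp, inner_sum]
      rw [Finset.sum_eq_single q]
      · rw [real_inner_smul_right]
      · intro p hp hpq
        rw [real_inner_smul_right, horth q p (Ne.symm hpq) (F q) (hF q) (F p) (hF p), mul_zero]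
      · intro h; exact absurd hq h
    rw [h0, inner_zero_right] at hinner
    have := (mul_eq_zero.mp hinner.symm).resolve_left (sub_ne_zero.mpr hne)
    exact hFq (inner_self_eq_zero.mp this)
  -- support has at most one element
  have huniq : ∀ q ∈ F.support, ∀ q' ∈ F.support, q = q' := by
    intro q hq q' hq'
    have hFq : F q ≠ 0 := Finsupp.mem_support_iff.mp hq
    have hFq' : F q' ≠ 0 := Finsupp.mem_support_iff.mp hq'
    have e1 : HasEigenvalue (toEuclideanLin A) q.2 :=
      hasEigenvalue_of_hasEigenvector ⟨(hF q).1, hFq⟩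
    have e2 : HasEigenvalue (toEuclideanLin B) q.1 :=
      hasEigenvalue_of_hasEigenvector ⟨(hF q).2, hFq⟩
    have e3 : HasEigenvalue (toEuclideanLin A) q'.2 :=
      hasEigenvalue_of_hasEigenvector ⟨(hF q').1, hFq'⟩
    have e4 : HasEigenvalue (toEuclideanLin B) q'.1 :=
      hasEigenvalue_of_hasEigenvector ⟨(hF q').2, hFq'⟩
    have := hc q.2 q.1 q'.2 q'.1 e1 e2 e3 e4 (by rw [hsupp q hq, hsupp q' hq'])
    exact Prod.ext this.2 this.1
  rcases Finset.eq_empty_or_nonempty F.support with hemp | ⟨q₀, hq₀⟩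
  · have : v = 0 := by rw [← hsum', hemp, Finset.sum_empty]
    exact ⟨0, 0, by simp [this], by simp [this]⟩
  · have hvq : v = F q₀ := by
      rw [← hsum', Finset.eq_singleton_iff_unique_mem.mpr ⟨hq₀, fun x hx => huniq x hx q₀ hq₀⟩,
        Finset.sum_singleton]
    exact ⟨q₀.2, q₀.1, by rw [hvq]; exact mem_eigenspace_iff.mp (hF q₀).1,
      by rw [hvq]; exact mem_eigenspace_iff.mp (hF q₀).2⟩

private lemma joint_diag (A B : Matrix (Fin N) (Fin N) ℝ)
    (hA : A.IsHermitian) (hB : B.IsHermitian) (hAB : A * B = B * A) :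
    ∃ U : Matrix (Fin N) (Fin N) ℝ, Uᵀ * U = 1 ∧ (Uᵀ * A * U).IsDiag ∧ (Uᵀ * B * U).IsDiag := by
  classical
  have hfinA : Set.Finite {l : ℝ | HasEigenvalue (toEuclideanLin A) l} :=
    Module.End.finite_hasEigenvalue (toEuclideanLin A : Module.End ℝ (EuclideanSpace ℝ (Fin N)))
  have hfinB : Set.Finite {l : ℝ | HasEigenvalue (toEuclideanLin B) l} :=
    Module.End.finite_hasEigenvalue (toEuclideanLin B : Module.End ℝ (EuclideanSpace ℝ (Fin N)))
  set bad : Set ℝ := (fun q : (ℝ × ℝ) × (ℝ × ℝ) => (q.2.1 - q.1.1) / (q.1.2 - q.2.2)) ''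
    (({l : ℝ | HasEigenvalue (toEuclideanLin A) l} ×ˢ {l : ℝ | HasEigenvalue (toEuclideanLin B) l}) ×ˢ
      ({l : ℝ | HasEigenvalue (toEuclideanLin A) l} ×ˢ {l : ℝ | HasEigenvalue (toEuclideanLin B) l})) with hbad
  have hbadfin : bad.Finite :=
    Set.Finite.image _ (((hfinA.prod hfinB).prod (hfinA.prod hfinB)))
  obtain ⟨c, hc⟩ := hbadfin.infinite_compl.nonempty
  have hcgood : ∀ l1 m1 l2 m2 : ℝ, HasEigenvalue (toEuclideanLin A) l1 →
      HasEigenvalue (toEuclideanLin B) m1 → HasEigenvalue (toEuclideanLin A) l2 →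
      HasEigenvalue (toEuclideanLin B) m2 → l1 + c * m1 = l2 + c * m2 →
      l1 = l2 ∧ m1 = m2 := by
    intro l1 m1 l2 m2 e1 e2 e3 e4 heq
    rcases eq_or_ne m1 m2 with hm | hm
    · subst hm; exact ⟨by linarith, rfl⟩
    · exfalso
      apply hc
      refine ⟨((l1, m1), (l2, m2)), ⟨⟨e1, e2⟩, ⟨e3, e4⟩⟩, ?_⟩
      have hne : m1 - m2 ≠ 0 := sub_ne_zero.mpr hm
      field_simp
      linarith
  have hT : (A + c • B).IsHermitian := by
    rw [Matrix.IsHermitian, conjTranspose_add, conjTranspose_smul, hA.eq, hB.eq]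
    simp
  set b := hT.eigenvectorBasis with hbdef
  have heig : ∀ j, ∃ lam mu : ℝ, (A *ᵥ (fun k => b j k)) = lam • (fun k => b j k) ∧
      (B *ᵥ (fun k => b j k)) = mu • (fun k => b j k) := by
    intro j
    have hvE : toEuclideanLin (A + c • B) (b j) = hT.eigenvalues j • (b j) :=
      congrArg (WithLp.equiv 2 (Fin N → ℝ)).symm (hT.mulVec_eigenvectorBasis j)
    obtain ⟨lam, mu, h1, h2⟩ := key_vec A B hA hB hAB c hcgood _ _ hvE
    exact ⟨lam, mu, congrArg (WithLp.equiv 2 (Fin N → ℝ)) h1,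
      congrArg (WithLp.equiv 2 (Fin N → ℝ)) h2⟩
  choose lam mu hlam hmu using heig
  set U : Matrix (Fin N) (Fin N) ℝ := Matrix.of fun k i => b i k with hU
  have hinner : ∀ i j, ∑ k, b i k * b j k = if i = j then (1:ℝ) else 0 := by
    intro i j
    have := orthonormal_iff_ite.mp b.orthonormal i j
    rw [PiLp.inner_apply] at this
    simpa [mul_comm] using this
  have hUtU : Uᵀ * U = 1 := by
    ext i j
    simp only [Matrix.mul_apply, Matrix.transpose_apply, hU, Matrix.of_apply, Matrix.one_apply]
    exact hinner i j
  have hdiag : ∀ (C : Matrix (Fin N) (Fin N) ℝ) (e : Fin N → ℝ),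
      (∀ j, (C *ᵥ (fun k => b j k)) = e j • (fun k => b j k)) → (Uᵀ * C * U).IsDiag := by
    intro C e he i j hij
    have hentry : (Uᵀ * C * U) i j = ∑ k, b i k * (C *ᵥ (fun l => b j l)) k := by
      rw [mul_assoc]
      simp only [Matrix.mul_apply, Matrix.transpose_apply, hU, Matrix.of_apply, mulVec,
        dotProduct]
    rw [hentry, he j]
    simp only [Pi.smul_apply, smul_eq_mul]
    calc ∑ k, b i k * (e j * b j k) = e j * ∑ k, b i k * b j k := by
          rw [Finset.mul_sum]; exact Finset.sum_congr rfl fun k _ => by ring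
      _ = 0 := by rw [hinner i j, if_neg hij, mul_zero]
  exact ⟨U, hUtU, hdiag A lam hlam, hdiag B mu hmu⟩


private lemma sdp_commute_aux (M : Matrix (Fin N) (Fin N) ℝ) (hM : M.PosSemidef)
    (α γ : ℝ) (hα : 0 < α) (hγ : 0 < γ)
    (Gs : Matrix (Fin N) (Fin N) ℝ)
    (hGs : Gs.PosSemidef) (htr : Matrix.trace Gs = (N : ℝ))
    (hopt : ∀ G : Matrix (Fin N) (Fin N) ℝ, G.PosSemidef →
      Matrix.trace G = (N : ℝ) →
      -(1/2) * Real.log ((1 + α • Gs).det) + (γ/2) * Matrix.trace (Gs * M) ≤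
        -(1/2) * Real.log ((1 + α • G).det) + (γ/2) * Matrix.trace (G * M)) :
    Gs * M = M * Gs := by
  classical
  letI : SeminormedRing (Matrix (Fin N) (Fin N) ℝ) := Matrix.linftyOpSemiNormedRing
  letI : NormedRing (Matrix (Fin N) (Fin N) ℝ) := Matrix.linftyOpNormedRing
  letI : NormedAlgebra ℝ (Matrix (Fin N) (Fin N) ℝ) := Matrix.linftyOpNormedAlgebra
  letI : CompleteSpace (Matrix (Fin N) (Fin N) ℝ) := FiniteDimensional.complete ℝ _
  have hGsT : Gsᵀ = Gs := by
    rw [← conjTranspose_eq_transpose_of_trivial]; exact hGs.isHermitian.eq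
  have hMT : Mᵀ = M := by
    rw [← conjTranspose_eq_transpose_of_trivial]; exact hM.isHermitian.eq
  set A : Matrix (Fin N) (Fin N) ℝ := M * Gs - Gs * M with hA
  have hAt : Aᵀ = -A := by
    rw [hA, transpose_sub, transpose_mul, transpose_mul, hGsT, hMT, neg_sub]
  -- the orthogonal path
  set e : ℝ → Matrix (Fin N) (Fin N) ℝ := fun t => exp (t • A) with he
  have het : ∀ t, (e t)ᵀ = e (-t) := by
    intro t
    show (exp (t • A))ᵀ = exp ((-t) • A)
    rw [← Matrix.exp_transpose, transpose_smul, hAt, smul_neg, ← neg_smul]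
  have hee : ∀ s t : ℝ, e s * e t = e (s + t) := by
    intro s t
    show exp (s • A) * exp (t • A) = exp ((s + t) • A)
    rw [← Matrix.exp_add_of_commute (s • A) (t • A)
      ((Commute.refl A).smul_left s |>.smul_right t), ← add_smul]
  have he0 : e 0 = 1 := by rw [he]; simp [exp_zero]
  have heet : ∀ t, e t * (e t)ᵀ = 1 := by
    intro t; rw [het, hee, add_neg_cancel, he0]
  have hete : ∀ t, (e t)ᵀ * e t = 1 := by
    intro t; rw [het, hee, neg_add_cancel, he0]
  set G : ℝ → Matrix (Fin N) (Fin N) ℝ := fun t => e t * Gs * (e t)ᵀ with hG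
  have hGpsd : ∀ t, (G t).PosSemidef := by
    intro t
    have := hGs.mul_mul_conjTranspose_same (e t)
    rwa [conjTranspose_eq_transpose_of_trivial] at this
  have hGtr : ∀ t, Matrix.trace (G t) = (N : ℝ) := by
    intro t
    rw [hG]
    rw [Matrix.trace_mul_cycle, hete, one_mul, htr]
  have hGdet : ∀ t, (1 + α • G t).det = (1 + α • Gs).det := by
    intro t
    have key : 1 + α • G t = e t * (1 + α • Gs) * (e t)ᵀ := by
      rw [mul_add, add_mul, mul_one, heet, mul_smul_comm, smul_mul_assoc, hG]
    rw [key, det_mul, det_mul]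
    have h1 : (e t).det * ((e t)ᵀ).det = 1 := by rw [← det_mul, heet t, det_one]
    calc (e t).det * (1 + α • Gs).det * ((e t)ᵀ).det
        = ((e t).det * ((e t)ᵀ).det) * (1 + α • Gs).det := by ring
      _ = (1 + α • Gs).det := by rw [h1, one_mul]
  have hineq : ∀ t, Matrix.trace (Gs * M) ≤ Matrix.trace (G t * M) := by
    intro t
    have := hopt (G t) (hGpsd t) (hGtr t)
    rw [hGdet t] at this
    have h2 := le_of_add_le_add_left this
    exact le_of_mul_le_mul_left h2 (by positivity)
  -- the derivative
  set h : ℝ → ℝ := fun t => Matrix.trace (G t * M) with hh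
  have hzero : h 0 = Matrix.trace (Gs * M) := by
    rw [hh]; simp [hG, he0]
  have hmin : IsLocalMin h 0 := by
    apply Filter.Eventually.of_forall
    intro t
    rw [hzero]
    exact hineq t
  -- HasDerivAt for h at 0
  have d1 : HasDerivAt (fun t : ℝ => exp (t • A)) A (0 : ℝ) := by
    have hd := hasDerivAt_exp_smul_const (𝕂 := ℝ) A (0 : ℝ)
    simp at hd
    exact hd
  have d2 : HasDerivAt (fun t : ℝ => exp (-(t • A))) (-A) (0 : ℝ) := by
    have hneg : HasDerivAt (fun t : ℝ => -t) (-1) (0 : ℝ) := hasDerivAt_neg (0 : ℝ)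
    have hexp : HasDerivAt (fun u : ℝ => exp (u • A)) (exp ((-(0:ℝ)) • A) * A) (-(0:ℝ)) :=
      hasDerivAt_exp_smul_const (𝕂 := ℝ) A (-(0 : ℝ))
    have h3 := HasDerivAt.scomp (0 : ℝ) hexp hneg
    simp only [Function.comp_def, neg_smul] at h3
    simp at h3
    exact h3
  have dF : HasDerivAt (fun t : ℝ => exp (t • A) * Gs * exp (-(t • A)) * M)
      ((A * Gs - Gs * A) * M) (0 : ℝ) := by
    have h4 := ((d1.mul_const Gs).mul d2).mul_const M
    simp only [zero_smul, neg_zero, exp_zero, mul_one, one_mul] at h4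
    have hval : (A * Gs + Gs * -A) * M = (A * Gs - Gs * A) * M := by
      rw [mul_neg, ← sub_eq_add_neg]
    rw [← hval]
    exact h4
  have dh : HasDerivAt h (Matrix.trace ((A * Gs - Gs * A) * M)) 0 := by
    have het' : ∀ t : ℝ, (exp (t • A))ᵀ = exp (-(t • A)) := by
      intro t
      have h5 := het t
      simp only [he] at h5
      rw [neg_smul] at h5
      exact h5
    have hfun : h = fun t => Matrix.trace (exp (t • A) * Gs * exp (-(t • A)) * M) := by
      funext t
      simp only [hh, hG, he]
      rw [het' t]
    rw [hfun]
    set L : Matrix (Fin N) (Fin N) ℝ →L[ℝ] ℝ :=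
      LinearMap.toContinuousLinearMap (Matrix.traceLinearMap (Fin N) ℝ ℝ) with hL
    have := L.hasFDerivAt.comp_hasDerivAt 0 dF
    simp [hL] at this
    exact this
  have hD : Matrix.trace ((A * Gs - Gs * A) * M) = 0 := hmin.hasDerivAt_eq_zero dh
  -- algebra: conclude A = 0
  have key : Matrix.trace (Aᵀ * A) = 0 := by
    have h1 : (A * Gs - Gs * A) * M = A * (Gs * M) - Gs * A * M := by noncomm_ring
    have h2 : Matrix.trace (Gs * A * M) = Matrix.trace (A * (M * Gs)) := by
      rw [Matrix.trace_mul_cycle, Matrix.trace_mul_comm]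
    have h3 : Matrix.trace ((A * Gs - Gs * A) * M)
        = Matrix.trace (A * (Gs * M) - A * (M * Gs)) := by
      rw [h1, Matrix.trace_sub, Matrix.trace_sub, h2]
    have h4 : A * (Gs * M) - A * (M * Gs) = A * -A := by
      rw [← mul_sub, hA]; congr 1; noncomm_ring
    have h5 : A * -A = Aᵀ * A := by rw [hAt]; noncomm_ring
    rw [← h5, ← h4, ← h3, hD]
  have hA0 : A = 0 := by
    have hsum : ∑ j, ∑ i, A i j * A i j = 0 := by
      rw [← key]
      simp [Matrix.trace, Matrix.diag, Matrix.mul_apply]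
    ext i j
    have hnn : ∀ j' ∈ Finset.univ, (0:ℝ) ≤ ∑ i, A i j' * A i j' :=
      fun j' _ => Finset.sum_nonneg fun i _ => mul_self_nonneg _
    have hj := (Finset.sum_eq_zero_iff_of_nonneg hnn).mp hsum j (Finset.mem_univ j)
    have hi := (Finset.sum_eq_zero_iff_of_nonneg
      (fun i' _ => mul_self_nonneg (A i' j))).mp hj i (Finset.mem_univ i)
    simpa using mul_self_eq_zero.mp hi
  have := sub_eq_zero.mp hA0
  rw [this]

end Aux

/-- Any optimal solution `G⋆` of the SDP
`min −½ log det(I + αG) + (γ/2) Tr(GM)  s.t.  G ⪰ 0, Tr(G) = N`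
commutes with `M`, hence is simultaneously diagonalizable with `M` by an
orthogonal matrix. -/
theorem sdp_optimal_commutes_with_M (N : ℕ)
    (M : Matrix (Fin N) (Fin N) ℝ) (hM : M.PosSemidef)
    (α γ : ℝ) (hα : 0 < α) (hγ : 0 < γ)
    (Gs : Matrix (Fin N) (Fin N) ℝ)
    (hGs : Gs.PosSemidef) (htr : Matrix.trace Gs = (N : ℝ))
    (hopt : ∀ G : Matrix (Fin N) (Fin N) ℝ, G.PosSemidef →
      Matrix.trace G = (N : ℝ) →
      -(1/2) * Real.log ((1 + α • Gs).det) + (γ/2) * Matrix.trace (Gs * M) ≤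
        -(1/2) * Real.log ((1 + α • G).det) + (γ/2) * Matrix.trace (G * M)) :
    Gs * M = M * Gs ∧
      ∃ U : Matrix (Fin N) (Fin N) ℝ, Uᵀ * U = 1 ∧
        (Uᵀ * Gs * U).IsDiag ∧ (Uᵀ * M * U).IsDiag := by
  have hcomm : Gs * M = M * Gs := sdp_commute_aux M hM α γ hα hγ Gs hGs htr hopt
  exact ⟨hcomm, joint_diag Gs M hGs.isHermitian hM.isHermitian hcomm⟩
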